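/- Suppose a representation (p, M, N, U, V) with M ∈ ℝ^(n×n), N ∈ ℝ^(n×d), U ∈ ℝ^(d×d), V ∈ ℝ^(d×n) satisfies range U ⊇ range V and ker[U | −V] ⊆ ker[N | −M]. Then there exist matrices S ∈ ℝ^(n×d) and P ∈ ℝ^(d×n) with range P ⊆ (ker U)ᗮ and ker S ⊇ (range U)ᗮ such that V = UP, N = SU, and M = SUP; moreover P and S with these orthogonality properties are unique. -/

import Mathlib

open Matrix

/-- If `(p, M, N, U, V)` satisfies `range U ⊇ range V` and
`ker [U | −V] ⊆ ker [N | −M]`, then there are unique `S`, `P` with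
`range P ⊆ (ker U)ᗮ`, `ker S ⊇ (range U)ᗮ`, `V = U P`, `N = S U` and `M = S U P`. -/
theorem stmt10 {n d : ℕ} (M : Matrix (Fin n) (Fin n) ℝ) (N : Matrix (Fin n) (Fin d) ℝ)
    (U : Matrix (Fin d) (Fin d) ℝ) (V : Matrix (Fin d) (Fin n) ℝ)
    (hran : LinearMap.range (Matrix.toEuclideanLin V) ≤ LinearMap.range (Matrix.toEuclideanLin U))
    (hker : ∀ (z : Fin d → ℝ) (y : Fin n → ℝ),
      U.mulVec z = V.mulVec y → N.mulVec z = M.mulVec y) :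
    ∃! SP : Matrix (Fin n) (Fin d) ℝ × Matrix (Fin d) (Fin n) ℝ,
      LinearMap.range (Matrix.toEuclideanLin SP.2) ≤ (LinearMap.ker (Matrix.toEuclideanLin U))ᗮ ∧
      (LinearMap.range (Matrix.toEuclideanLin U))ᗮ ≤ LinearMap.ker (Matrix.toEuclideanLin SP.1) ∧
      V = U * SP.2 ∧ N = SP.1 * U ∧ M = SP.1 * U * SP.2 := by
  classical
  set u := Matrix.toEuclideanLin U with hu
  set v := Matrix.toEuclideanLin V with hv
  set nl := Matrix.toEuclideanLin N with hnl
  set ml := Matrix.toEuclideanLin M with hml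
  have hmul : ∀ {a b c : ℕ} (A : Matrix (Fin a) (Fin b) ℝ) (B : Matrix (Fin b) (Fin c) ℝ),
      Matrix.toEuclideanLin (A * B) =
        (Matrix.toEuclideanLin A).comp (Matrix.toEuclideanLin B) := by
    intro a b c A B
    apply LinearMap.ext
    intro x
    simp [Matrix.toEuclideanLin_apply, Matrix.mulVec_mulVec]
  have hker' : ∀ (z : EuclideanSpace ℝ (Fin d)) (y : EuclideanSpace ℝ (Fin n)),
      u z = v y → nl z = ml y := by
    intro z y h
    have h2 : U.mulVec ((WithLp.equiv 2 (Fin d → ℝ)) z)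
        = V.mulVec ((WithLp.equiv 2 (Fin n → ℝ)) y) := congrArg (WithLp.equiv 2 _) h
    exact congrArg (WithLp.equiv 2 (Fin n → ℝ)).symm (hker _ _ h2)
  set K := (LinearMap.ker u)ᗮ with hK
  set R := LinearMap.range u with hR
  -- right inverse of u on its range
  obtain ⟨g, hg⟩ := Module.projective_lifting_property u.rangeRestrict LinearMap.id
    (LinearMap.surjective_rangeRestrict u)
  have hgu : ∀ x : R, u (g x) = (x : EuclideanSpace ℝ (Fin d)) := by
    intro x
    simpa using congrArg Subtype.val (LinearMap.congr_fun hg x)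
  -- v factors through range u
  set v' : EuclideanSpace ℝ (Fin n) →ₗ[ℝ] R :=
    v.codRestrict R (fun y => hran (LinearMap.mem_range_self v y)) with hv'
  set p : EuclideanSpace ℝ (Fin n) →ₗ[ℝ] EuclideanSpace ℝ (Fin d) :=
    K.subtype ∘ₗ K.orthogonalProjectionOnto.toLinearMap ∘ₗ (g ∘ₗ v') with hp
  have hprange : LinearMap.range p ≤ K := by
    rintro x ⟨y, rfl⟩
    exact (K.orthogonalProjectionOnto (g (v' y))).2
  have hup : ∀ y, u (p y) = v y := by
    intro y
    have hmem : g (v' y) - (K.orthogonalProjectionOnto (g (v' y)) : EuclideanSpace ℝ (Fin d))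
        ∈ Kᗮ := Submodule.sub_starProjection_mem_orthogonal _
    rw [show Kᗮ = LinearMap.ker u from Submodule.orthogonal_orthogonal _] at hmem
    have h0 : u (g (v' y)) - u ((K.orthogonalProjectionOnto (g (v' y)) : EuclideanSpace ℝ (Fin d)))
        = 0 := by rw [← map_sub]; exact hmem
    have h1 : u (p y) = u (g (v' y)) := (sub_eq_zero.mp h0).symm
    rw [h1, hgu (v' y)]
    rfl
  -- construct s
  set s : EuclideanSpace ℝ (Fin d) →ₗ[ℝ] EuclideanSpace ℝ (Fin n) :=
    nl ∘ₗ g ∘ₗ R.orthogonalProjectionOnto.toLinearMap with hs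
  have hsker : Rᗮ ≤ LinearMap.ker s := by
    intro x hx
    have : R.orthogonalProjectionOnto x = 0 :=
      Submodule.orthogonalProjectionOnto_apply_of_mem_orthogonal hx
    simp [hs, this]
  have hnl_eq : ∀ z z' : EuclideanSpace ℝ (Fin d), u z = u z' → nl z = nl z' := by
    intro z z' h
    have h2 : u (z - z') = v 0 := by rw [map_sub, h, sub_self, map_zero]
    have := hker' (z - z') 0 h2
    rw [map_sub, map_zero] at this
    exact sub_eq_zero.mp this
  have hsu : ∀ z, s (u z) = nl z := by
    intro z
    have hz : u z ∈ R := LinearMap.mem_range_self u z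
    have h1 : ((R.orthogonalProjectionOnto (u z)) : EuclideanSpace ℝ (Fin d)) = u z :=
      Submodule.starProjection_eq_self_iff.mpr hz
    have h2 : u (g (R.orthogonalProjectionOnto (u z))) = u z := by rw [hgu]; exact h1
    show nl (g (R.orthogonalProjectionOnto (u z))) = nl z
    exact hnl_eq _ _ h2
  have hsv : ∀ y, s (v y) = ml y := by
    intro y
    rw [← hup y, hsu]
    exact hker' (p y) y (hup y)
  -- matrices
  refine ⟨(Matrix.toEuclideanLin.symm s, Matrix.toEuclideanLin.symm p), ?_, ?_⟩
  · constructor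
    · simpa using hprange
    constructor
    · simpa using hsker
    refine ⟨?_, ?_, ?_⟩
    · apply Matrix.toEuclideanLin.injective
      rw [hmul]
      simp only [LinearEquiv.apply_symm_apply]
      exact LinearMap.ext fun y => (hup y).symm
    · apply Matrix.toEuclideanLin.injective
      rw [hmul]
      simp only [LinearEquiv.apply_symm_apply]
      exact LinearMap.ext fun z => (hsu z).symm
    · apply Matrix.toEuclideanLin.injective
      rw [hmul, hmul]
      simp only [LinearEquiv.apply_symm_apply]
      refine LinearMap.ext fun y => ?_
      simp only [LinearMap.comp_apply]
      rw [hup y, hsv y]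
  · rintro ⟨S', P'⟩ ⟨hP'range, hS'ker, hVP, hNU, hM⟩
    set p' := Matrix.toEuclideanLin P' with hp'
    set s' := Matrix.toEuclideanLin S' with hs'
    have hup' : ∀ y, u (p' y) = v y := by
      intro y
      have := congrArg Matrix.toEuclideanLin hVP
      rw [hmul] at this
      exact (LinearMap.congr_fun this y).symm
    have hsu' : ∀ z, s' (u z) = nl z := by
      intro z
      have := congrArg Matrix.toEuclideanLin hNU
      rw [hmul] at this
      exact (LinearMap.congr_fun this z).symm
    have hpp : p' = p := by
      refine LinearMap.ext fun y => ?_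
      have hker_mem : p' y - p y ∈ LinearMap.ker u := by
        rw [LinearMap.mem_ker, map_sub, hup' y, hup y, sub_self]
      have horth : p' y - p y ∈ K :=
        Submodule.sub_mem K (hP'range (LinearMap.mem_range_self p' y))
          (hprange (LinearMap.mem_range_self p y))
      have : p' y - p y = 0 := by
        have := (Submodule.orthogonal_disjoint (LinearMap.ker u)).le_bot
          ⟨hker_mem, horth⟩
        simpa using this
      exact sub_eq_zero.mp this
    have hss : s' = s := by
      refine LinearMap.ext fun x => ?_
      obtain ⟨a, ha, b, hb, rfl⟩ := Submodule.exists_add_mem_mem_orthogonal (K := R) x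
      obtain ⟨w, rfl⟩ := ha
      have hb1 : s' b = 0 := hS'ker hb
      have hb2 : s b = 0 := hsker hb
      rw [map_add, map_add, hb1, hb2, hsu' w, hsu w]
    refine Prod.ext_iff.mpr ⟨?_, ?_⟩
    · apply Matrix.toEuclideanLin.injective
      rw [LinearEquiv.apply_symm_apply]
      exact hss
    · apply Matrix.toEuclideanLin.injective
      rw [LinearEquiv.apply_symm_apply]
      exact hpp
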